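/- Let X be a compact Hausdorff space with uniformity 𝒰 and f : X → X continuous. For every entourage E ∈ 𝒰 there exists n ∈ ℕ such that for every x ∈ X there exists z ∈ X with ω(z) ⊆ ⋃_{i=1}^{n} B_E(f^i(x)). -/

import Mathlib

def omegaLim {X : Type*} [TopologicalSpace X] (f : X → X) (x : X) : Set X :=
  ⋂ N : ℕ, closure {y | ∃ n > N, f^[n] x = y}

lemma omegaLim_isClosed {X : Type*} [TopologicalSpace X] (f : X → X) (x : X) :
    IsClosed (omegaLim f x) :=
  isClosed_iInter fun _ => isClosed_closure

lemma omega_pointwise {X : Type*} [UniformSpace X] [CompactSpace X]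
    (f : X → X) (D : Set (X × X)) (hD : D ∈ uniformity X) (hDo : IsOpen D)
    (hDs : SetRel.IsSymm D) (x : X) :
    ∃ n : ℕ, omegaLim f x ⊆ ⋃ i ∈ Finset.Icc 1 n, UniformSpace.ball (f^[i] x) D := by
  have hcomp : IsCompact (omegaLim f x) := (omegaLim_isClosed f x).isCompact
  have hcover : omegaLim f x ⊆ ⋃ i : ℕ, UniformSpace.ball (f^[i + 1] x) D := by
    intro y hy
    have hy0 : y ∈ closure {y | ∃ n > 0, f^[n] x = y} := by
      have := Set.mem_iInter.1 hy 0
      exact this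
    rcases mem_closure_iff_nhds.1 hy0 _ (UniformSpace.ball_mem_nhds y hD) with
      ⟨s, hs1, m, hm, hms⟩
    refine Set.mem_iUnion.2 ⟨m - 1, ?_⟩
    have hsm : (y, s) ∈ D := hs1
    have hys : (s, y) ∈ D := hDs.symm _ _ hsm
    have : m - 1 + 1 = m := Nat.succ_pred_eq_of_pos hm
    rw [UniformSpace.ball, Set.mem_preimage, this, hms]
    exact hys
  obtain ⟨t, ht⟩ := hcomp.elim_finite_subcover
    (fun i : ℕ => UniformSpace.ball (f^[i + 1] x) D)
    (fun i => UniformSpace.isOpen_ball _ hDo) hcover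
  refine ⟨t.sup id + 1, fun y hy => ?_⟩
  rcases Set.mem_iUnion₂.1 (ht hy) with ⟨i, hit, hyi⟩
  refine Set.mem_iUnion₂.2 ⟨i + 1, ?_, hyi⟩
  simp only [Finset.mem_Icc]
  exact ⟨Nat.succ_le_succ (Nat.zero_le _), Nat.succ_le_succ (Finset.le_sup (f := id) hit)⟩

theorem omega_trapped_uniformly_uniform {X : Type*} [UniformSpace X] [CompactSpace X] [T2Space X]
    (f : X → X) (hf : Continuous f) (E : Set (X × X)) (hE : E ∈ uniformity X) :
    ∃ n : ℕ, ∀ x : X, ∃ z : X,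
      omegaLim f z ⊆ ⋃ i ∈ Finset.Icc 1 n, UniformSpace.ball (f^[i] x) E := by
  -- get V with V ○ V ⊆ E
  obtain ⟨V, hV, hVE⟩ := comp_mem_uniformity_sets hE
  -- get open symmetric D ⊆ V
  obtain ⟨D, ⟨hD, hDo, hDs⟩, hDV⟩ := (uniformity_hasBasis_open_symmetric.mem_iff).1 hV
  have hDDE : ∀ a b c : X, (a, b) ∈ D → (a, c) ∈ D → (c, b) ∈ E := by
    intro a b c hab hac
    exact hVE ⟨_, hDV (hDs.symm _ _ hac), hDV hab⟩
  -- pointwise bound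
  choose N hN using omega_pointwise f D hD hDo hDs
  -- neighborhoods
  set W : X → Set X := fun x =>
    ⋂ i ∈ Finset.Icc 1 (N x), {x' | (f^[i] x, f^[i] x') ∈ D} with hW
  have hWopen : ∀ x, IsOpen (W x) := by
    intro x
    refine isOpen_biInter_finset fun i _ => ?_
    exact hDo.preimage (Continuous.prodMk continuous_const (hf.iterate i))
  have hxW : ∀ x, x ∈ W x := by
    intro x
    exact Set.mem_iInter₂.2 fun i _ => refl_mem_uniformity hD
  obtain ⟨t, ht⟩ := isCompact_univ.elim_finite_subcover W hWopen
    (fun x _ => Set.mem_iUnion.2 ⟨x, hxW x⟩)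
  refine ⟨t.sup N, fun x => ?_⟩
  rcases Set.mem_iUnion₂.1 (ht (Set.mem_univ x)) with ⟨z, hzt, hxz⟩
  refine ⟨z, fun y hy => ?_⟩
  rcases Set.mem_iUnion₂.1 (hN z hy) with ⟨i, hi, hyi⟩
  have hi' := Finset.mem_Icc.1 hi
  refine Set.mem_iUnion₂.2 ⟨i, Finset.mem_Icc.2 ⟨hi'.1, le_trans hi'.2 (Finset.le_sup hzt)⟩, ?_⟩
  have hxi : (f^[i] z, f^[i] x) ∈ D := Set.mem_iInter₂.1 hxz i hi
  exact hDDE _ _ _ hyi hxi
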